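/- For every fixed k ≥ 1 there is a constant λ_k such that for all n ≥ 1 and all points x = ℓ/n of the subdivided interval [0,1], |Z^{:k:}(x) − x^k| ≤ λ_k · x^{max(k−2,0)} / n², where Z^{:k:} is defined by trapezoidal discrete integration on the chain {ℓ/n}. -/

import Mathlib

open Finset

lemma aux_pow_sub_pow {x y : ℝ} (hx : 0 ≤ x) (hxy : x ≤ y) (i : ℕ) :
    y ^ (i + 1) - x ^ (i + 1) ≤ ((i : ℝ) + 1) * (y - x) * y ^ i := by
  induction i with
  | zero => norm_num
  | succ i ih =>
    have hy : (0:ℝ) ≤ y := hx.trans hxy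
    have h1 : x ^ (i + 1) ≤ y ^ (i + 1) := pow_le_pow_left₀ hx hxy _
    have h2 : y * (y ^ (i+1) - x ^ (i+1)) ≤ y * (((i:ℝ)+1) * (y - x) * y ^ i) :=
      mul_le_mul_of_nonneg_left ih hy
    have h3 : y ^ (i + 1 + 1) - x ^ (i + 1 + 1) =
        y * (y ^ (i+1) - x ^ (i+1)) + x ^ (i+1) * (y - x) := by ring
    have h4 : x ^ (i+1) * (y - x) ≤ y ^ (i+1) * (y - x) :=
      mul_le_mul_of_nonneg_right h1 (by linarith)
    have h5 : y * (((i:ℝ)+1) * (y - x) * y ^ i) = ((i:ℝ)+1) * (y - x) * y ^ (i+1) := by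
      ring
    push_cast
    nlinarith [h2, h3, h4, h5, pow_nonneg hy (i+1)]

lemma aux_term_bound {x y : ℝ} (hx : 0 ≤ x) (hxy : x ≤ y) {k i : ℕ} (hik : i ≤ k) :
    (y ^ i - x ^ i) * (y ^ (k - i) - x ^ (k - i)) ≤
      (k : ℝ)^2 * (y - x)^2 * y ^ (k - 2) := by
  have hy : (0:ℝ) ≤ y := hx.trans hxy
  have hh : (0:ℝ) ≤ y - x := by linarith
  rcases Nat.eq_zero_or_pos i with rfl | hi
  · simp
    positivity
  rcases eq_or_lt_of_le hik with rfl | hik'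
  · simp
    positivity
  obtain ⟨a, rfl⟩ : ∃ a, i = a + 1 := ⟨i - 1, by omega⟩
  obtain ⟨b, hb⟩ : ∃ b, k - (a+1) = b + 1 := ⟨k - a - 2, by omega⟩
  have hab : a + b = k - 2 := by omega
  have hak : ((a:ℝ)+1) ≤ (k:ℝ) := by exact_mod_cast hik'.le
  have hbk : ((b:ℝ)+1) ≤ (k:ℝ) := by
    have : b + 1 ≤ k := by omega
    exact_mod_cast this
  have f1 : y ^ (a+1) - x ^ (a+1) ≤ (k:ℝ) * ((y - x) * y ^ a) :=
    (aux_pow_sub_pow hx hxy a).trans (by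
      rw [mul_assoc]
      exact mul_le_mul_of_nonneg_right hak (by positivity))
  have f2 : y ^ (b+1) - x ^ (b+1) ≤ (k:ℝ) * ((y - x) * y ^ b) :=
    (aux_pow_sub_pow hx hxy b).trans (by
      rw [mul_assoc]
      exact mul_le_mul_of_nonneg_right hbk (by positivity))
  have p1 : 0 ≤ y ^ (a+1) - x ^ (a+1) := sub_nonneg.2 (pow_le_pow_left₀ hx hxy _)
  have p2 : 0 ≤ y ^ (b+1) - x ^ (b+1) := sub_nonneg.2 (pow_le_pow_left₀ hx hxy _)
  rw [hb]
  calc (y ^ (a+1) - x ^ (a+1)) * (y ^ (b+1) - x ^ (b+1))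
      ≤ ((k:ℝ) * ((y - x) * y ^ a)) * ((k:ℝ) * ((y - x) * y ^ b)) :=
        mul_le_mul f1 f2 p2 (by positivity)
    _ = (k : ℝ)^2 * (y - x)^2 * y ^ (a + b) := by
        rw [pow_add]; ring
    _ = (k : ℝ)^2 * (y - x)^2 * y ^ (k - 2) := by rw [hab]

lemma aux_identity (x y : ℝ) (k : ℕ) :
    ((k:ℝ)+1) * (x ^ k + y ^ k) - 2 * ∑ i ∈ Finset.range (k+1), x ^ i * y ^ (k - i) =
    ∑ i ∈ Finset.range (k+1), (y ^ i - x ^ i) * (y ^ (k - i) - x ^ (k - i)) := by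
  have refl1 : ∑ i ∈ Finset.range (k+1), x ^ (k - i) * y ^ i
      = ∑ i ∈ Finset.range (k+1), x ^ i * y ^ (k - i) := by
    rw [← Finset.sum_range_reflect (fun i => x ^ (k - i) * y ^ i) (k+1)]
    apply Finset.sum_congr rfl
    intro i hi
    simp only [Finset.mem_range] at hi
    have h1 : k + 1 - 1 - i = k - i := by omega
    have h2 : k - (k - i) = i := by omega
    rw [h1, h2]
  have expand : ∀ i ∈ Finset.range (k+1),
      (y ^ i - x ^ i) * (y ^ (k - i) - x ^ (k - i)) =
      y ^ k + x ^ k - x ^ (k - i) * y ^ i - x ^ i * y ^ (k - i) := by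
    intro i hi
    simp only [Finset.mem_range] at hi
    have h1 : y ^ i * y ^ (k - i) = y ^ k := by
      rw [← pow_add]; congr 1; omega
    have h2 : x ^ i * x ^ (k - i) = x ^ k := by
      rw [← pow_add]; congr 1; omega
    linear_combination h1 + h2
  rw [Finset.sum_congr rfl expand]
  rw [Finset.sum_sub_distrib, Finset.sum_sub_distrib, Finset.sum_add_distrib, refl1]
  simp only [Finset.sum_const, Finset.card_range, nsmul_eq_mul]
  push_cast
  ring

lemma aux_trunc {x y : ℝ} (hx : 0 ≤ x) (hxy : x ≤ y) (k : ℕ) :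
    |((k:ℝ)+1) * (y - x) * (x ^ k + y ^ k) / 2 - (y ^ (k+1) - x ^ (k+1))| ≤
      ((k:ℝ)+1) * (k:ℝ)^2 / 2 * (y - x)^3 * y ^ (k - 2) := by
  have hy : (0:ℝ) ≤ y := hx.trans hxy
  have hh : (0:ℝ) ≤ y - x := by linarith
  have geom : y ^ (k+1) - x ^ (k+1) =
      (y - x) * ∑ i ∈ Finset.range (k+1), x ^ i * y ^ (k - i) := by
    have h := geom_sum₂_mul x y (k+1)
    simp only [Nat.add_sub_cancel] at h
    linear_combination h
  set S := ∑ i ∈ Finset.range (k+1), x ^ i * y ^ (k - i) with hS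
  set D := ∑ i ∈ Finset.range (k+1), (y ^ i - x ^ i) * (y ^ (k - i) - x ^ (k - i)) with hD
  have hid : ((k:ℝ)+1) * (x ^ k + y ^ k) - 2 * S = D := aux_identity x y k
  have hD0 : 0 ≤ D := by
    apply Finset.sum_nonneg
    intro i hi
    have := pow_le_pow_left₀ hx hxy i
    have := pow_le_pow_left₀ hx hxy (k - i)
    apply mul_nonneg <;> linarith
  have hD1 : D ≤ ((k:ℝ)+1) * ((k:ℝ)^2 * (y - x)^2 * y ^ (k - 2)) := by
    calc D ≤ ∑ _i ∈ Finset.range (k+1), (k:ℝ)^2 * (y - x)^2 * y ^ (k - 2) := by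
          apply Finset.sum_le_sum
          intro i hi
          simp only [Finset.mem_range] at hi
          exact aux_term_bound hx hxy (by omega)
      _ = ((k:ℝ)+1) * ((k:ℝ)^2 * (y - x)^2 * y ^ (k - 2)) := by
          rw [Finset.sum_const, Finset.card_range, nsmul_eq_mul]
          push_cast; ring
  have hτ : ((k:ℝ)+1) * (y - x) * (x ^ k + y ^ k) / 2 - (y ^ (k+1) - x ^ (k+1)) =
      (y - x) / 2 * D := by
    rw [geom, ← hid]; ring
  rw [hτ, abs_of_nonneg (by positivity)]
  calc (y - x) / 2 * D ≤ (y - x) / 2 * (((k:ℝ)+1) * ((k:ℝ)^2 * (y - x)^2 * y ^ (k - 2))) :=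
        mul_le_mul_of_nonneg_left hD1 (by positivity)
    _ = ((k:ℝ)+1) * (k:ℝ)^2 / 2 * (y - x)^3 * y ^ (k - 2) := by ring

/-- For each fixed `k ≥ 1` there is a constant `λ_k` such that on every
subdivision `{ℓ/n}` of `[0,1]`, the discrete power satisfies
`|Z^{:k:}(x) − x^k| ≤ λ_k x^(max(k−2,0)) / n²` (here `k - 2` is truncated
natural subtraction, which equals `max (k-2) 0`). -/
theorem discrete_power_approx (k : ℕ) (hk : 1 ≤ k) :
    ∃ lam : ℝ, ∀ n : ℕ, 1 ≤ n → ∀ Z : ℕ → ℕ → ℝ,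
      (∀ ℓ, Z 0 ℓ = 1) →
      (∀ j, Z (j + 1) 0 = 0) →
      (∀ j ℓ, Z (j + 1) (ℓ + 1) =
        Z (j + 1) ℓ + ((j : ℝ) + 1) * (Z j ℓ + Z j (ℓ + 1)) / (2 * n)) →
      ∀ ℓ ≤ n, |Z k ℓ - ((ℓ : ℝ) / n) ^ k| ≤
        lam * ((ℓ : ℝ) / n) ^ (k - 2) / (n : ℝ) ^ 2 := by
  induction k with
  | zero => exact absurd hk (by norm_num)
  | succ k ih =>
    rcases Nat.eq_zero_or_pos k with rfl | hkpos
    · -- base case k + 1 = 1 : Z 1 ℓ = ℓ / n exactly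
      refine ⟨0, ?_⟩
      intro n hn Z hZ0 hZinit hZrec ℓ hℓ
      have hn0 : (n:ℝ) ≠ 0 := Nat.cast_ne_zero.2 (by omega)
      have hZ1 : ∀ m, Z 1 m = (m:ℝ)/n := by
        intro m
        induction m with
        | zero => simp [hZinit 0]
        | succ m ihm =>
          have h := hZrec 0 m
          rw [hZ0 m, hZ0 (m+1), ihm] at h
          rw [h]
          push_cast
          field_simp
          ring
      rw [hZ1 ℓ]
      simp
    · obtain ⟨lam, hlam⟩ := ih hkpos
      set A : ℝ := ((k:ℝ)+1) * |lam| + ((k:ℝ)+1)*(k:ℝ)^2/2 with hA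
      have hA0 : 0 ≤ A := by positivity
      refine ⟨A, ?_⟩
      intro n hn Z hZ0 hZinit hZrec
      have hn0 : (0:ℝ) < n := by exact_mod_cast Nat.lt_of_lt_of_le Nat.zero_lt_one hn
      have hn0' : (n:ℝ) ≠ 0 := ne_of_gt hn0
      have hek := hlam n hn Z hZ0 hZinit hZrec
      have main : ∀ ℓ, ℓ ≤ n → |Z (k+1) ℓ - ((ℓ:ℝ)/n)^(k+1)| ≤
          A * ℓ * (1/(n:ℝ))^3 * ((ℓ:ℝ)/n)^(k-2) := by
        intro ℓ
        induction ℓ with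
        | zero =>
          intro _
          simp [hZinit k]
        | succ ℓ ihl =>
          intro hl1
          have hl : ℓ ≤ n := by omega
          have Hrec := hZrec k ℓ
          have hcast : ((ℓ+1 : ℕ):ℝ) = (ℓ:ℝ)+1 := by push_cast; ring
          rw [hcast]
          set x : ℝ := (ℓ:ℝ)/n with hxdef
          set y : ℝ := ((ℓ:ℝ)+1)/n with hydef
          have hx0 : (0:ℝ) ≤ x := by positivity
          have hxy : x ≤ y := by
            rw [hxdef, hydef]
            exact div_le_div_of_nonneg_right (by linarith) hn0.le
          have hy0 : (0:ℝ) ≤ y := hx0.trans hxy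
          have hyx : y - x = 1/n := by
            rw [hxdef, hydef]
            field_simp
            ring
          have hQP : x^(k-2) ≤ y^(k-2) := pow_le_pow_left₀ hx0 hxy _
          have hek1 : |Z k ℓ - x^k| ≤ |lam| * x^(k-2)/(n:ℝ)^2 := by
            refine (hek ℓ hl).trans ?_
            gcongr
            exact le_abs_self lam
          have hek2 : |Z k (ℓ+1) - y^k| ≤ |lam| * y^(k-2)/(n:ℝ)^2 := by
            have h := hek (ℓ+1) hl1
            rw [hcast] at h
            refine h.trans ?_
            gcongr
            exact le_abs_self lam
          have decomp : Z (k+1) (ℓ+1) - y^(k+1) =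
              (Z (k+1) ℓ - x^(k+1))
              + ((k:ℝ)+1)/(2*n) * ((Z k ℓ - x^k) + (Z k (ℓ+1) - y^k))
              + (((k:ℝ)+1) * (y - x) * (x ^ k + y ^ k) / 2 - (y ^ (k+1) - x ^ (k+1))) := by
            rw [Hrec, hxdef, hydef]
            field_simp
            ring
          have c0 : (0:ℝ) ≤ ((k:ℝ)+1)/(2*n) := by positivity
          have step1 : |Z (k+1) (ℓ+1) - y^(k+1)| ≤
              |Z (k+1) ℓ - x^(k+1)|
              + ((k:ℝ)+1)/(2*n) * (|Z k ℓ - x^k| + |Z k (ℓ+1) - y^k|)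
              + |((k:ℝ)+1) * (y - x) * (x ^ k + y ^ k) / 2 - (y ^ (k+1) - x ^ (k+1))| := by
            rw [decomp]
            refine (abs_add_three _ _ _).trans ?_
            gcongr
            rw [abs_mul, abs_of_nonneg c0]
            exact mul_le_mul_of_nonneg_left (abs_add_le _ _) c0
          have hE : |Z (k+1) ℓ - x^(k+1)| ≤ A * ℓ * (1/(n:ℝ))^3 * y^(k-2) := by
            refine (ihl hl).trans ?_
            gcongr
          have hM : ((k:ℝ)+1)/(2*n) * (|Z k ℓ - x^k| + |Z k (ℓ+1) - y^k|) ≤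
              ((k:ℝ)+1) * |lam| * (1/(n:ℝ))^3 * y^(k-2) := by
            calc ((k:ℝ)+1)/(2*n) * (|Z k ℓ - x^k| + |Z k (ℓ+1) - y^k|)
                ≤ ((k:ℝ)+1)/(2*n) * (|lam| * x^(k-2)/(n:ℝ)^2 + |lam| * y^(k-2)/(n:ℝ)^2) :=
                  mul_le_mul_of_nonneg_left (add_le_add hek1 hek2) c0
              _ ≤ ((k:ℝ)+1)/(2*n) * (|lam| * y^(k-2)/(n:ℝ)^2 + |lam| * y^(k-2)/(n:ℝ)^2) := by
                  gcongr
              _ = ((k:ℝ)+1) * |lam| * (1/(n:ℝ))^3 * y^(k-2) := by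
                  field_simp
                  ring
          have hT : |((k:ℝ)+1) * (y - x) * (x ^ k + y ^ k) / 2 - (y ^ (k+1) - x ^ (k+1))| ≤
              ((k:ℝ)+1)*(k:ℝ)^2/2 * (1/(n:ℝ))^3 * y^(k-2) := by
            refine (aux_trunc hx0 hxy k).trans (le_of_eq ?_)
            rw [hyx]
          calc |Z (k+1) (ℓ+1) - y^(k+1)| ≤ _ := step1
            _ ≤ A * ℓ * (1/(n:ℝ))^3 * y^(k-2)
                + ((k:ℝ)+1) * |lam| * (1/(n:ℝ))^3 * y^(k-2)
                + ((k:ℝ)+1)*(k:ℝ)^2/2 * (1/(n:ℝ))^3 * y^(k-2) :=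
              add_le_add (add_le_add hE hM) hT
            _ = A * ((ℓ:ℝ)+1) * (1/(n:ℝ))^3 * y^(k-2) := by
              rw [hA]; ring
      intro ℓ hℓ
      refine (main ℓ hℓ).trans ?_
      have hexp : k + 1 - 2 = k - 1 := by omega
      rw [hexp]
      have hx0 : (0:ℝ) ≤ (ℓ:ℝ)/n := by positivity
      have hx1 : (ℓ:ℝ)/n ≤ 1 := by
        rw [div_le_one hn0]
        exact_mod_cast hℓ
      have key : ((ℓ:ℝ)/n) * ((ℓ:ℝ)/n)^(k-2) ≤ ((ℓ:ℝ)/n)^(k-1) := by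
        rcases Nat.lt_or_ge k 2 with h2 | h2
        · have e1 : k - 2 = 0 := by omega
          have e2 : k - 1 = 0 := by omega
          rw [e1, e2]
          simpa using hx1
        · have e1 : k - 1 = (k - 2) + 1 := by omega
          rw [e1, pow_succ]
          exact le_of_eq (mul_comm _ _)
      calc A * ℓ * (1/(n:ℝ))^3 * ((ℓ:ℝ)/n)^(k-2)
          = A * (((ℓ:ℝ)/n) * ((ℓ:ℝ)/n)^(k-2)) / (n:ℝ)^2 := by
            field_simp
        _ ≤ A * ((ℓ:ℝ)/n)^(k-1) / (n:ℝ)^2 := by gcongr
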